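/- For γ > 0 and S, I, D, σ² > 0 with γ = S/(I + D + σ²), the fractional programming identity holds: log(1 + γ) = max over μ ≥ 0 of [log(1+μ) − μ + (1+μ)S/(S + I + D + σ²)], with the maximum attained at μ* = γ. -/

import Mathlib

/-- Fractional programming (Lagrangian dual) identity: for S, I, D, σ² > 0 and
γ = S/(I + D + σ²) > 0, log(1+γ) is the maximum over μ ≥ 0 of
log(1+μ) − μ + (1+μ)S/(S + I + D + σ²), attained at μ = γ. -/
theorem fp_lagrangian_dual_identity (S I D σ2 γ : ℝ)
    (hS : 0 < S) (hI : 0 < I) (hD : 0 < D) (hσ : 0 < σ2) (hγ : 0 < γ)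
    (hdef : γ = S / (I + D + σ2)) :
    IsGreatest { v : ℝ | ∃ μ : ℝ, 0 ≤ μ ∧
        v = Real.log (1 + μ) - μ + (1 + μ) * S / (S + I + D + σ2) }
      (Real.log (1 + γ)) ∧
    Real.log (1 + γ) =
      Real.log (1 + γ) - γ + (1 + γ) * S / (S + I + D + σ2) := by
  have hT : 0 < I + D + σ2 := by linarith
  have h1γ : 0 < 1 + γ := by linarith
  have hγT : γ * (I + D + σ2) = S := by
    rw [hdef]; field_simp
  have hcross : γ * (S + I + D + σ2) = S * (1 + γ) := by nlinarith
  have hkey : S / (S + I + D + σ2) = γ / (1 + γ) := by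
    rw [div_eq_div_iff (by positivity) (ne_of_gt h1γ)]; linarith
  have hatt : Real.log (1 + γ) =
      Real.log (1 + γ) - γ + (1 + γ) * S / (S + I + D + σ2) := by
    rw [mul_div_assoc, hkey]; field_simp; ring
  refine ⟨⟨⟨γ, hγ.le, hatt⟩, ?_⟩, hatt⟩
  rintro v ⟨μ, hμ, rfl⟩
  rw [mul_div_assoc, hkey]
  have h1μ : 0 < 1 + μ := by linarith
  have hlog : Real.log ((1 + μ) / (1 + γ)) ≤ (1 + μ) / (1 + γ) - 1 :=
    Real.log_le_sub_one_of_pos (by positivity)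
  rw [Real.log_div (by linarith) (by linarith)] at hlog
  have h2 : (1 + μ) * (γ / (1 + γ)) = μ - ((1 + μ) / (1 + γ) - 1) := by
    field_simp; ring
  linarith
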